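/- Let $\mathcal{L}$ be as above with $2\rho<r<R$ and $\max_i|z_i|\le\rho$, and let $\mathcal{T}$ be its inverse. Then for every analytic $f$ on $D$ and every $r_0, r_1$ with $2\rho<r_0<r_1<R$, $\|\mathcal{T}f\|_{r_0}\le\frac{r_0}{(1-2\rho/r_1)(1-r_0/r_1)}\|f\|_{r_1}$. -/

import Mathlib

noncomputable def betaFn (s : ℕ → ℂ) : ℕ → ℂ
  | 0 => 1
  | (n+1) => -∑ i : Fin (n+1), s (n+1-(i:ℕ)) * betaFn s i

lemma betaFn_conv (s : ℕ → ℂ) (hs0 : s 0 = 1) (m : ℕ) :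
    ∑ l ∈ Finset.range (m+1), betaFn s l * s (m - l) = if m = 0 then 1 else 0 := by
  cases m with
  | zero => simp [betaFn, hs0]
  | succ n =>
    rw [Finset.sum_range_succ]
    have : betaFn s (n+1) = -∑ i ∈ Finset.range (n+1), s (n+1-i) * betaFn s i := by
      rw [betaFn, Fin.sum_univ_eq_sum_range (fun i => s (n+1-i) * betaFn s i) (n+1)]
    simp only [Nat.sub_self, hs0, mul_one, this, Nat.succ_ne_zero, if_false]
    rw [← Finset.sum_neg_distrib, ← Finset.sum_add_distrib]
    apply Finset.sum_eq_zero
    intro l _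
    ring

lemma betaFn_bound (s : ℕ → ℂ) (ρ : ℝ) (hρ0 : 0 ≤ ρ)
    (hs : ∀ m, ‖s m‖ ≤ ρ ^ m) : ∀ n, ‖betaFn s n‖ ≤ (2*ρ) ^ n := by
  intro n
  induction n using Nat.strong_induction_on with
  | _ n ih =>
    match n with
    | 0 => simp [betaFn]
    | (n+1) =>
      rw [betaFn]
      calc ‖-∑ i : Fin (n+1), s (n+1-(i:ℕ)) * betaFn s i‖
          ≤ ∑ i : Fin (n+1), ‖s (n+1-(i:ℕ)) * betaFn s i‖ := by
            rw [norm_neg]; exact norm_sum_le _ _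
        _ ≤ ∑ i : Fin (n+1), 2^(i:ℕ) * ρ^(n+1) := by
            apply Finset.sum_le_sum
            intro i _
            rw [norm_mul]
            calc ‖s (n+1-(i:ℕ))‖ * ‖betaFn s i‖
                ≤ ρ^(n+1-(i:ℕ)) * (2*ρ)^(i:ℕ) := by
                  apply mul_le_mul (hs _) (ih i i.isLt) (norm_nonneg _) (by positivity)
              _ = 2^(i:ℕ) * ρ^(n+1) := by
                  rw [mul_pow, ← mul_assoc, mul_comm (ρ ^ (n + 1 - (i:ℕ))), mul_assoc,
                    ← pow_add]
                  congr 2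
                  omega
        _ = (∑ i ∈ Finset.range (n+1), (2:ℝ)^i) * ρ^(n+1) := by
            rw [Fin.sum_univ_eq_sum_range (fun i => (2:ℝ)^i * ρ^(n+1)) (n+1), Finset.sum_mul]
        _ ≤ 2^(n+1) * ρ^(n+1) := by
            apply mul_le_mul_of_nonneg_right _ (by positivity)
            rw [geom_sum_eq (by norm_num)]
            norm_num
        _ = (2*ρ)^(n+1) := by rw [mul_pow]

def sigFinEquiv : (ℕ × ℕ) ≃ (Σ m : ℕ, Fin (m+1)) where
  toFun x := ⟨x.1 + x.2, ⟨x.1, by omega⟩⟩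
  invFun y := ((y.2 : ℕ), y.1 - (y.2 : ℕ))
  left_inv := fun ⟨p, q⟩ => by simp
  right_inv := fun ⟨m, l⟩ => by
    have hl : (l : ℕ) ≤ m := Nat.lt_succ_iff.mp l.isLt
    dsimp
    congr 1
    · omega
    · rw [Fin.heq_ext_iff (by omega)]

open intervalIntegral Real in
lemma cauchy_apply (f : ℂ → ℂ) (c w : ℂ) (r : ℝ) (n : ℕ) :
    (cauchyPowerSeries f c r n fun _ => w) = (cauchyPowerSeries f c r n fun _ => 1) * w ^ n := by
  simp only [cauchyPowerSeries, ContinuousMultilinearMap.mkPiRing_apply, Finset.prod_const,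
    Finset.card_fin, one_pow, one_smul, smul_eq_mul]
  ring

open intervalIntegral Real in
lemma cauchy_coeff_bound {f : ℂ → ℂ} {r M : ℝ} (hr : 0 < r)
    (hf : ContinuousOn f (Metric.sphere (0:ℂ) r))
    (hM : ∀ w : ℂ, ‖w‖ = r → ‖f w‖ ≤ M) (n : ℕ) :
    ‖cauchyPowerSeries f 0 r n fun _ => 1‖ ≤ M * (r⁻¹) ^ n := by
  have h1 : ‖cauchyPowerSeries f 0 r n fun _ => 1‖ ≤ ‖cauchyPowerSeries f 0 r n‖ := by
    calc ‖cauchyPowerSeries f 0 r n fun _ => 1‖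
        ≤ ‖cauchyPowerSeries f 0 r n‖ * ∏ _i : Fin n, ‖(1:ℂ)‖ :=
          ContinuousMultilinearMap.le_opNorm _ _
      _ = ‖cauchyPowerSeries f 0 r n‖ := by simp
  refine h1.trans ((norm_cauchyPowerSeries_le f 0 r n).trans ?_)
  rw [abs_of_pos hr]
  have hcont : Continuous fun θ : ℝ => ‖f (circleMap 0 r θ)‖ :=
    (hf.comp_continuous (continuous_circleMap 0 r)
      (fun θ => by simpa using circleMap_mem_sphere (0:ℂ) hr.le θ)).norm
  have hint : (∫ θ in (0:ℝ)..2*π, ‖f (circleMap 0 r θ)‖) ≤ ∫ _θ in (0:ℝ)..2*π, M := by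
    apply intervalIntegral.integral_mono_on (by positivity) (hcont.intervalIntegrable _ _)
      intervalIntegrable_const
    intro θ _
    exact hM _ (by simp [abs_of_pos hr])
  have h2π : (0:ℝ) < 2*π := by positivity
  calc (2*π)⁻¹ * (∫ θ in (0:ℝ)..2*π, ‖f (circleMap 0 r θ)‖) * (r⁻¹)^n
      ≤ (2*π)⁻¹ * (2*π*M) * (r⁻¹)^n := by
        have : (∫ θ in (0:ℝ)..2*π, ‖f (circleMap 0 r θ)‖) ≤ 2*π*M := by
          simpa [intervalIntegral.integral_const, smul_eq_mul] using hint
        gcongr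
    _ = M * (r⁻¹)^n := by field_simp

set_option maxHeartbeats 2000000 in
/-- Continuity bound for the inverse operator `T = L⁻¹`:
`‖T f‖_{r₀} ≤ (r₀ / ((1 - 2ρ/r₁)(1 - r₀/r₁))) ‖f‖_{r₁}`.
Here `h = T f`, i.e. `L h = f`. -/
theorem T_norm_bound (R ρ r₀ r₁ : ℝ) (k : ℕ) (hk : 1 ≤ k) (z : Fin k → ℂ)
    (hρ0 : 0 ≤ ρ) (hρ : ∀ i, ‖z i‖ ≤ ρ)
    (h1 : 2 * ρ < r₀) (h2 : r₀ < r₁) (h3 : r₁ < R)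
    (f h : ℂ → ℂ)
    (hfA : DifferentiableOn ℂ f (Metric.ball (0 : ℂ) R))
    (hhA : DifferentiableOn ℂ h (Metric.ball (0 : ℂ) R)) (hh0 : h 0 = 0)
    (hLh : ∀ w ∈ Metric.ball (0 : ℂ) R, (∀ j, w ≠ z j) →
      f w = (1 / (k : ℂ)) * ∑ j, (h w - h (z j)) / (w - z j))
    (M : ℝ) (hM : ∀ w : ℂ, ‖w‖ ≤ r₁ → ‖f w‖ ≤ M) :
    ∀ w : ℂ, ‖w‖ ≤ r₀ →
      ‖h w‖ ≤ (r₀ / ((1 - 2 * ρ / r₁) * (1 - r₀ / r₁))) * M := by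
  intro w₀ hw₀
  -- positivity facts
  have hr₀ : 0 < r₀ := lt_of_le_of_lt (by linarith) h1
  have hr₁ : 0 < r₁ := hr₀.trans h2
  have hR : 0 < R := hr₁.trans h3
  have hρr₁ : ρ < r₁ := by linarith
  set t : ℝ := (r₁ + R)/2 with ht_def
  have ht1 : r₁ < t := by rw [ht_def]; linarith
  have htR : t < R := by rw [ht_def]; linarith
  have ht0 : 0 < t := hr₁.trans ht1
  have hM0 : 0 ≤ M := le_trans (norm_nonneg _) (hM 0 (by simpa using hr₁.le))
  have hk0 : (k:ℂ) ≠ 0 := Nat.cast_ne_zero.mpr (by omega)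
  -- power sums
  set s : ℕ → ℂ := fun q => (k:ℂ)⁻¹ * ∑ j, z j ^ q with hs_def
  have hs0 : s 0 = 1 := by
    simp only [hs_def, pow_zero, Finset.sum_const, Finset.card_univ, Fintype.card_fin,
      nsmul_eq_mul, mul_one]
    exact inv_mul_cancel₀ hk0
  have hsb : ∀ m, ‖s m‖ ≤ ρ ^ m := by
    intro m
    rw [hs_def]
    simp only [norm_mul, norm_inv, Complex.norm_natCast]
    calc (k:ℝ)⁻¹ * ‖∑ j, z j ^ m‖
        ≤ (k:ℝ)⁻¹ * ∑ j : Fin k, ρ ^ m := by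
          apply mul_le_mul_of_nonneg_left _ (by positivity)
          refine (norm_sum_le _ _).trans (Finset.sum_le_sum fun j _ => ?_)
          rw [norm_pow]
          exact pow_le_pow_left₀ (norm_nonneg _) (hρ j) m
      _ = ρ ^ m := by
          rw [Finset.sum_const, Finset.card_univ, Fintype.card_fin, nsmul_eq_mul, ← mul_assoc,
            inv_mul_cancel₀ (by exact_mod_cast (by omega : k ≠ 0)), one_mul]
  -- power series of h at radius t
  set tn : NNReal := ⟨t, ht0.le⟩ with htn_def
  have htn : (tn : ℝ) = t := rfl
  have hXt : Metric.closedBall (0:ℂ) (tn:ℝ) ⊆ Metric.ball (0:ℂ) R := by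
    rw [htn]
    exact (Metric.closedBall_subset_ball htR)
  have Hh : HasFPowerSeriesOnBall h (cauchyPowerSeries h 0 (tn:ℝ)) 0 tn :=
    DifferentiableOn.hasFPowerSeriesOnBall (hhA.mono hXt) (by exact_mod_cast ht0)
  set c : ℕ → ℂ := fun m => cauchyPowerSeries h 0 (tn:ℝ) m (fun _ => 1) with hc_def
  have hhsum : ∀ {u : ℂ}, ‖u‖ < t → HasSum (fun m => c m * u ^ m) (h u) := by
    intro u hu
    have hu' : u ∈ Metric.eball (0:ℂ) tn := by
      rw [Metric.emetric_ball_nnreal]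
      rw [Metric.mem_ball, dist_zero_right]
      exact hu
    have H := Hh.hasSum (y := u) (by simpa using hu')
    rw [zero_add] at H
    have hfe : (fun n => cauchyPowerSeries h 0 (↑tn) n fun _ => u) = fun m => c m * u ^ m :=
      funext fun m => cauchy_apply h 0 u tn m
    rw [hfe] at H
    exact H
  -- bound for c
  obtain ⟨Kh, hKh0, hch⟩ : ∃ K, 0 ≤ K ∧ ∀ m, ‖c m‖ ≤ K * (t⁻¹) ^ m := by
    have hsph : Metric.sphere (0:ℂ) t ⊆ Metric.ball (0:ℂ) R := fun x hx => by
      simp only [Metric.mem_sphere, Metric.mem_ball] at *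
      rw [hx]; exact htR
    have hcont : ContinuousOn h (Metric.sphere (0:ℂ) t) :=
      (hhA.continuousOn).mono hsph
    obtain ⟨C, hC⟩ := (isCompact_sphere (0:ℂ) t).exists_bound_of_continuousOn hcont
    refine ⟨max C 0, le_max_right _ _, fun m => ?_⟩
    have := cauchy_coeff_bound (M := max C 0) ht0 hcont (fun w hw => by
      exact le_trans (hC w (by simpa using hw)) (le_max_left _ _)) m
    exact this
  -- power series of f at radius r₁
  set rn : NNReal := ⟨r₁, hr₁.le⟩ with hrn_def
  have hrn : (rn : ℝ) = r₁ := rfl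
  have hXr : Metric.closedBall (0:ℂ) (rn:ℝ) ⊆ Metric.ball (0:ℂ) R := by
    rw [hrn]; exact Metric.closedBall_subset_ball h3
  have Hf : HasFPowerSeriesOnBall f (cauchyPowerSeries f 0 (rn:ℝ)) 0 rn :=
    DifferentiableOn.hasFPowerSeriesOnBall (hfA.mono hXr) (by exact_mod_cast hr₁)
  have hab : ∀ p, ‖cauchyPowerSeries f 0 (rn:ℝ) p (fun _ => 1)‖ ≤ M * (r₁⁻¹) ^ p := by
    intro p
    have hsph : Metric.sphere (0:ℂ) r₁ ⊆ Metric.ball (0:ℂ) R := fun x hx => by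
      simp only [Metric.mem_sphere, Metric.mem_ball] at *
      rw [hx]; exact h3
    have := cauchy_coeff_bound (M := M) hr₁ ((hfA.continuousOn).mono hsph)
      (fun w hw => hM w hw.le) p
    simpa [hrn] using this
  -- the B coefficients
  have hcsq : ∀ p, Summable (fun q => c (p + q + 1) * s q) := by
    intro p
    apply Summable.of_norm_bounded (g := fun q => (Kh * (t⁻¹)^(p+1)) * (ρ/t)^q)
      (((summable_geometric_of_lt_one (by positivity)
        ((div_lt_one ht0).mpr (hρr₁.trans ht1))).mul_left _))
    intro q
    rw [norm_mul]
    calc ‖c (p+q+1)‖ * ‖s q‖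
        ≤ (Kh * (t⁻¹)^(p+q+1)) * ρ^q := by
          apply mul_le_mul (hch _) (hsb _) (norm_nonneg _) (by positivity)
      _ = (Kh * (t⁻¹)^(p+1)) * (ρ/t)^q := by
          rw [show p+q+1 = (p+1)+q by omega, pow_add, div_eq_mul_inv, mul_pow]
          ring
  set B : ℕ → ℂ := fun p => ∑' q, c (p + q + 1) * s q with hB_def
  set CB : ℝ := (Kh * t⁻¹) * (1 - ρ/t)⁻¹ with hCB_def
  have hCB0 : 0 ≤ CB := by
    rw [hCB_def]
    have hlt : ρ/t < 1 := (div_lt_one ht0).mpr (hρr₁.trans ht1)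
    have hpos : (0:ℝ) < 1 - ρ/t := by linarith
    positivity
  have hBb' : ∀ p, ‖B p‖ ≤ CB * (t⁻¹) ^ p := by
    intro p
    have hsn : Summable (fun q => ‖c (p + q + 1) * s q‖) := by
      apply Summable.of_nonneg_of_le (fun q => norm_nonneg _)
        (fun q => ?_) (((summable_geometric_of_lt_one (by positivity)
          ((div_lt_one ht0).mpr (hρr₁.trans ht1))).mul_left (Kh * (t⁻¹)^(p+1))))
      rw [norm_mul]
      calc ‖c (p+q+1)‖ * ‖s q‖
          ≤ (Kh * (t⁻¹)^(p+q+1)) * ρ^q := by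
            apply mul_le_mul (hch _) (hsb _) (norm_nonneg _) (by positivity)
        _ = (Kh * (t⁻¹)^(p+1)) * (ρ/t)^q := by
            rw [show p+q+1 = (p+1)+q by omega, pow_add, div_eq_mul_inv, mul_pow]
            ring
    calc ‖B p‖
        = ‖∑' q, c (p + q + 1) * s q‖ := rfl
      _ ≤ ∑' q, ‖c (p + q + 1) * s q‖ := norm_tsum_le_tsum_norm hsn
      _ ≤ ∑' q, (Kh * (t⁻¹)^(p+1)) * (ρ/t)^q := by
          apply Summable.tsum_le_tsum _ hsn
            (((summable_geometric_of_lt_one (by positivity)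
              ((div_lt_one ht0).mpr (hρr₁.trans ht1))).mul_left _))
          intro q
          rw [norm_mul]
          calc ‖c (p+q+1)‖ * ‖s q‖
              ≤ (Kh * (t⁻¹)^(p+q+1)) * ρ^q := by
                apply mul_le_mul (hch _) (hsb _) (norm_nonneg _) (by positivity)
            _ = (Kh * (t⁻¹)^(p+1)) * (ρ/t)^q := by
                rw [show p+q+1 = (p+1)+q by omega, pow_add, div_eq_mul_inv, mul_pow]
                ring
      _ = CB * (t⁻¹) ^ p := by
          rw [tsum_mul_left, tsum_geometric_of_lt_one (by positivity)
            ((div_lt_one ht0).mpr (hρr₁.trans ht1)), hCB_def]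
          rw [pow_succ]
          ring
  set Q : FormalMultilinearSeries ℂ ℂ ℂ := FormalMultilinearSeries.ofScalars ℂ B with hQ_def
  have hQnorm : ∀ p, ‖Q p‖ = ‖B p‖ := by
    intro p
    rw [hQ_def, ]
    exact FormalMultilinearSeries.ofScalars_norm (E := ℂ) B p
  have hQrad : (tn : ENNReal) ≤ Q.radius := by
    apply Q.le_radius_of_bound CB
    intro p
    rw [hQnorm]
    calc ‖B p‖ * (tn:ℝ)^p ≤ (CB * (t⁻¹)^p) * t^p := by
          rw [htn]; exact mul_le_mul_of_nonneg_right (hBb' p) (by positivity)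
      _ = CB := by
          rw [mul_assoc, ← mul_pow, inv_mul_cancel₀ ht0.ne', one_pow, mul_one]
  have hrtn : (rn : ENNReal) ≤ (tn : ENNReal) := by
    rw [ENNReal.coe_le_coe]
    exact_mod_cast ht1.le
  have hQball : HasFPowerSeriesOnBall Q.sum Q 0 rn :=
    (Q.hasFPowerSeriesOnBall (lt_of_lt_of_le (by exact_mod_cast hr₁) (hrtn.trans hQrad))).mono
      (by exact_mod_cast hr₁) (hrtn.trans hQrad)
  -- the key identity
  have key : ∀ u : ℂ, ‖u‖ < r₁ → (∀ j, u ≠ z j) →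
      HasSum (fun p => B p * u ^ p) (f u) := by
    intro u hu hne
    have hu' : u ∈ Metric.ball (0:ℂ) R := by
      rw [Metric.mem_ball, dist_zero_right]
      exact hu.trans h3
    have hut : ‖u‖ < t := hu.trans ht1
    have hj : ∀ j : Fin k, HasSum
        (fun m => (k:ℂ)⁻¹ * (c m * ∑ p ∈ Finset.range m, u^p * (z j)^(m-1-p)))
        ((k:ℂ)⁻¹ * ((h u - h (z j)) * (u - z j)⁻¹)) := by
      intro j
      have hzj : ‖z j‖ < t := lt_of_le_of_lt (hρ j) (by linarith)
      have hsub := (hhsum hut).sub (hhsum hzj)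
      have h2' := (hsub.mul_right (u - z j)⁻¹).mul_left (k:ℂ)⁻¹
      have hne' : u - z j ≠ 0 := sub_ne_zero.mpr (hne j)
      have hfe : (fun m => (k:ℂ)⁻¹ * ((c m * u ^ m - c m * z j ^ m) * (u - z j)⁻¹))
          = fun m => (k:ℂ)⁻¹ * (c m * ∑ p ∈ Finset.range m, u^p * (z j)^(m-1-p)) := by
        funext m
        have hg : (∑ p ∈ Finset.range m, u^p * (z j)^(m-1-p)) * (u - z j) = u^m - (z j)^m :=
          geom_sum₂_mul u (z j) m
        rw [show c m * u ^ m - c m * z j ^ m = c m * (u^m - (z j)^m) by ring, ← hg]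
        field_simp
      rw [hfe] at h2'
      exact h2'
    have hsumj := hasSum_sum (s := Finset.univ) (fun j _ => hj j)
    have hfu : (∑ j : Fin k, (k:ℂ)⁻¹ * ((h u - h (z j)) * (u - z j)⁻¹)) = f u := by
      rw [hLh u hu' hne, one_div, Finset.mul_sum]
      apply Finset.sum_congr rfl
      intro j _
      rw [div_eq_mul_inv]
    have hfun : (fun m => ∑ j : Fin k,
          (k:ℂ)⁻¹ * (c m * ∑ p ∈ Finset.range m, u^p * (z j)^(m-1-p)))
        = fun m => c m * ∑ p ∈ Finset.range m, u^p * s (m-1-p) := by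
      funext m
      simp only [hs_def, Finset.mul_sum, Finset.sum_mul]
      rw [Finset.sum_comm]
      apply Finset.sum_congr rfl
      intro p _
      apply Finset.sum_congr rfl
      intro j _
      ring
    rw [hfun, hfu] at hsumj
    have hshift : HasSum (fun m => c (m+1) * ∑ p ∈ Finset.range (m+1), u^p * s (m-p)) (f u) := by
      have hsh := (hasSum_nat_add_iff'
        (f := fun m => c m * ∑ p ∈ Finset.range m, u^p * s (m-1-p)) 1).mpr hsumj
      simp only [Finset.range_one, Finset.sum_singleton, Finset.range_zero,
        Finset.sum_empty, mul_zero, sub_zero] at hsh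
      exact hsh
    set G2 : (Σ m : ℕ, Fin (m+1)) → ℂ :=
      fun y => c (y.1+1) * (u^((y.2:ℕ)) * s (y.1 - (y.2:ℕ))) with hG2_def
    have hG2e : ∀ x : ℕ × ℕ, G2 (sigFinEquiv x) = c ((x.1+x.2)+1) * (u^x.1 * s x.2) := by
      rintro ⟨p, q⟩
      simp [hG2_def, sigFinEquiv]
    have hsum2' : Summable (fun x : ℕ × ℕ => G2 (sigFinEquiv x)) := by
      apply Summable.of_norm_bounded
        (g := fun x : ℕ × ℕ => (Kh * t⁻¹) * ((‖u‖/t)^x.1 * (ρ/t)^x.2))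
      · have hs1 : Summable (fun p : ℕ => (‖u‖/t)^p) :=
          summable_geometric_of_lt_one (by positivity) ((div_lt_one ht0).mpr hut)
        have hs2 : Summable (fun q : ℕ => (ρ/t)^q) :=
          summable_geometric_of_lt_one (by positivity)
            ((div_lt_one ht0).mpr (hρr₁.trans ht1))
        exact (hs1.mul_of_nonneg hs2 (fun l => by positivity)
          (fun q => by positivity)).mul_left _
      · rintro ⟨p, q⟩
        rw [hG2e (p, q)]
        rw [norm_mul, norm_mul,
          norm_pow]
        calc ‖c ((p+q)+1)‖ * (‖u‖ ^ p * ‖s q‖)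
            ≤ (Kh * (t⁻¹)^((p+q)+1)) * (‖u‖ ^ p * ρ^q) := by
              apply mul_le_mul (hch _) _ (by positivity) (by positivity)
              apply mul_le_mul_of_nonneg_left (hsb _) (by positivity)
          _ = (Kh * t⁻¹) * ((‖u‖/t)^p * (ρ/t)^q) := by
              rw [show (p+q)+1 = 1+p+q by omega, pow_add, pow_add,
                div_eq_mul_inv, div_eq_mul_inv, mul_pow, mul_pow, pow_one]
              ring
    have hG2s : Summable G2 := (sigFinEquiv.summable_iff (f := G2)).mp hsum2'
    have hfib2 : ∀ m, HasSum (fun l : Fin (m+1) => G2 ⟨m, l⟩)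
        (c (m+1) * ∑ p ∈ Finset.range (m+1), u^p * s (m-p)) := by
      intro m
      have hft := hasSum_fintype (fun l : Fin (m+1) => G2 ⟨m, l⟩)
      have hval : ∑ l : Fin (m+1), G2 ⟨m, l⟩
          = c (m+1) * ∑ p ∈ Finset.range (m+1), u^p * s (m-p) := by
        rw [Fin.sum_univ_eq_sum_range (fun l => c (m+1) * (u^l * s (m - l))) (m+1),
          Finset.mul_sum]
      rw [hval] at hft
      exact hft
    have hsig2 := hG2s.hasSum.sigma hfib2
    have hval2 : ∑' y, G2 y = f u := hsig2.unique hshift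
    have hprod2 := hsum2'.hasSum.prod_fiberwise (fun p => (hsum2'.prod_factor p).hasSum)
    rw [sigFinEquiv.tsum_eq G2, hval2] at hprod2
    have hfl2 : ∀ p, (∑' q, G2 (sigFinEquiv (p, q))) = B p * u ^ p := by
      intro p
      calc (∑' q, G2 (sigFinEquiv (p, q)))
          = ∑' q, (c (p + q + 1) * s q) * u ^ p := by
            apply tsum_congr
            intro q
            rw [hG2e (p, q)]
            ring
        _ = (∑' q, c (p + q + 1) * s q) * u ^ p := tsum_mul_right
        _ = B p * u ^ p := rfl
    rw [show (fun p => B p * u ^ p) = (fun p => ∑' q, G2 (sigFinEquiv (p, q)))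
      from funext fun p => (hfl2 p).symm]
    exact hprod2
  -- equality on the whole ball
  have eqOn : Set.EqOn f Q.sum (Metric.ball (0:ℂ) r₁) := by
    have hQs : ∀ u : ℂ, ‖u‖ < r₁ → (∀ j, u ≠ z j) → f u = Q.sum u := by
      intro u hu hne
      have h1' := (key u hu hne).tsum_eq
      have h2' : Q.sum u = ∑' p, B p * u ^ p := by
        rw [FormalMultilinearSeries.sum]
        apply tsum_congr
        intro p
        rw [hQ_def, FormalMultilinearSeries.ofScalars_apply_eq, smul_eq_mul]
      rw [h2', h1']
    have hex : ∃ x₀ : ℂ, ‖x₀‖ < r₁ ∧ ∀ j, x₀ ≠ z j := by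
      by_contra hcon
      push_neg at hcon
      have hpt : ∀ i : Fin (k+1), ‖((r₁/((i:ℕ)+2) : ℝ) : ℂ)‖ < r₁ := by
        intro i
        rw [Complex.norm_real, Real.norm_of_nonneg (by positivity)]
        rw [div_lt_iff₀ (by positivity)]
        nlinarith [Nat.cast_nonneg (α := ℝ) (i:ℕ)]
      choose g hg using fun i : Fin (k+1) => hcon _ (hpt i)
      obtain ⟨i, i', hii, hgg⟩ := Fintype.exists_ne_map_eq_of_card_lt g (by simp)
      apply hii
      have hzz : ((r₁/((i:ℕ)+2):ℝ):ℂ) = ((r₁/((i':ℕ)+2):ℝ):ℂ) := by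
        rw [hg i, hg i', hgg]
      have hre : (r₁/((i:ℕ)+2):ℝ) = r₁/(((i':ℕ):ℝ)+2) := by exact_mod_cast hzz
      have hden : (((i:ℕ):ℝ)+2) = (((i':ℕ):ℝ)+2) := by
        have hi : (0:ℝ) < ((i:ℕ):ℝ)+2 := by positivity
        have hi' : (0:ℝ) < ((i':ℕ):ℝ)+2 := by positivity
        rw [div_eq_div_iff hi.ne' hi'.ne'] at hre
        have := mul_left_cancel₀ hr₁.ne' hre
        linarith
      have : ((i:ℕ):ℝ) = ((i':ℕ):ℝ) := by linarith
      have hnn : (i:ℕ) = (i':ℕ) := by exact_mod_cast this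
      exact Fin.ext hnn
    obtain ⟨x₀, hx₀, hx₀z⟩ := hex
    have han_f : AnalyticOnNhd ℂ f (Metric.ball (0:ℂ) r₁) := by
      intro x hx
      apply hfA.analyticAt
      apply Metric.isOpen_ball.mem_nhds
      rw [Metric.mem_ball, dist_zero_right] at hx ⊢
      exact hx.trans h3
    have han_Q : AnalyticOnNhd ℂ Q.sum (Metric.ball (0:ℂ) r₁) := by
      intro x hx
      apply hQball.analyticAt_of_mem
      rw [Metric.emetric_ball_nnreal]
      exact hx
    have hVopen : IsOpen (Metric.ball (0:ℂ) r₁ ∩ ⋂ j, {z j}ᶜ) :=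
      Metric.isOpen_ball.inter (isOpen_iInter_of_finite fun j => isOpen_compl_singleton)
    have hx₀V : x₀ ∈ Metric.ball (0:ℂ) r₁ ∩ ⋂ j, {z j}ᶜ := by
      constructor
      · rw [Metric.mem_ball, dist_zero_right]
        exact hx₀
      · rw [Set.mem_iInter]
        intro j
        exact hx₀z j
    have hev : f =ᶠ[nhds x₀] Q.sum := by
      apply Filter.eventuallyEq_of_mem (hVopen.mem_nhds hx₀V)
      intro v hv
      have hv1 : ‖v‖ < r₁ := by
        have := hv.1
        rwa [Metric.mem_ball, dist_zero_right] at this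
      have hv2 : ∀ j, v ≠ z j := by
        intro j
        have := Set.mem_iInter.mp hv.2 j
        exact this
      exact hQs v hv1 hv2
    have hx₀b : x₀ ∈ Metric.ball (0:ℂ) r₁ := by
      rw [Metric.mem_ball, dist_zero_right]
      exact hx₀
    exact han_f.eqOn_of_preconnected_of_eventuallyEq han_Q
      ((convex_ball (0:ℂ) r₁).isPreconnected) hx₀b hev
  -- uniqueness of power series
  have hfQ : HasFPowerSeriesOnBall f Q 0 rn := by
    refine ⟨hQball.r_le, hQball.r_pos, fun {y} hy => ?_⟩
    have hy' : (0:ℂ) + y ∈ Metric.ball (0:ℂ) r₁ := by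
      rw [Metric.emetric_ball_nnreal] at hy
      simpa [hrn] using hy
    rw [eqOn hy']
    exact hQball.hasSum hy
  have hQeq : Q = cauchyPowerSeries f 0 (rn:ℝ) :=
    hfQ.hasFPowerSeriesAt.eq_formalMultilinearSeries Hf.hasFPowerSeriesAt
  have hBb : ∀ p, ‖B p‖ ≤ M * (r₁⁻¹) ^ p := by
    intro p
    have hqp : Q p (fun _ => (1:ℂ)) = B p := by
      rw [hQ_def, FormalMultilinearSeries.ofScalars_apply_eq]
      simp
    have : B p = cauchyPowerSeries f 0 (rn:ℝ) p (fun _ => 1) := by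
      rw [← hqp, hQeq]
    rw [this]
    exact hab p
  -- the inversion identity
  have hβ := betaFn_bound s ρ hρ0 hsb
  have h2ρt : 2*ρ/r₁ < 1 := (div_lt_one hr₁).mpr (h1.trans h2)
  have inv : ∀ n, HasSum (fun l => betaFn s l * B (n + l)) (c (n+1)) := by
    intro n
    set G : (Σ m : ℕ, Fin (m+1)) → ℂ :=
      fun y => betaFn s (y.2:ℕ) * (c (n + y.1 + 1) * s (y.1 - (y.2:ℕ))) with hG_def
    have hGe : ∀ x : ℕ × ℕ, G (sigFinEquiv x)
        = betaFn s x.1 * (c (n + (x.1 + x.2) + 1) * s x.2) := by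
      rintro ⟨l, q⟩
      simp [hG_def, sigFinEquiv]
    have hsum2 : Summable (fun x : ℕ × ℕ => G (sigFinEquiv x)) := by
      apply Summable.of_norm_bounded
        (g := fun x : ℕ × ℕ => (Kh * (t⁻¹)^(n+1)) * ((2*ρ/t)^x.1 * (ρ/t)^x.2))
      · have hs1 : Summable (fun l : ℕ => (2*ρ/t)^l) :=
          summable_geometric_of_lt_one (by positivity)
            ((div_lt_one ht0).mpr (by linarith))
        have hs2 : Summable (fun q : ℕ => (ρ/t)^q) :=
          summable_geometric_of_lt_one (by positivity)
            ((div_lt_one ht0).mpr (hρr₁.trans ht1))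
        exact (hs1.mul_of_nonneg hs2 (fun l => by positivity)
          (fun q => by positivity)).mul_left _
      · rintro ⟨l, q⟩
        rw [hGe (l, q)]
        rw [norm_mul, norm_mul]
        calc ‖betaFn s l‖ * (‖c (n + (l + q) + 1)‖ * ‖s q‖)
            ≤ (2*ρ)^l * ((Kh * (t⁻¹)^(n + (l + q) + 1)) * ρ^q) := by
              apply mul_le_mul (hβ l) _ (by positivity) (by positivity)
              apply mul_le_mul (hch _) (hsb _) (norm_nonneg _) (by positivity)
          _ = (Kh * (t⁻¹)^(n+1)) * ((2*ρ/t)^l * (ρ/t)^q) := by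
              rw [show n + (l + q) + 1 = (n+1) + l + q by omega, pow_add, pow_add,
                div_eq_mul_inv, div_eq_mul_inv, mul_pow, mul_pow, mul_pow]
              ring
    have hGs : Summable G := (sigFinEquiv.summable_iff (f := G)).mp hsum2
    have hfib : ∀ m, HasSum (fun l : Fin (m+1) => G ⟨m, l⟩)
        (c (n + m + 1) * (if m = 0 then 1 else 0)) := by
      intro m
      have hft := hasSum_fintype (fun l : Fin (m+1) => G ⟨m, l⟩)
      have hval : ∑ l : Fin (m+1), G ⟨m, l⟩ = c (n + m + 1) * (if m = 0 then 1 else 0) := by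
        rw [Fin.sum_univ_eq_sum_range (fun l => betaFn s l * (c (n + m + 1) * s (m - l))) (m+1)]
        rw [← betaFn_conv s hs0 m, Finset.mul_sum]
        apply Finset.sum_congr rfl
        intros
        ring
      rw [hval] at hft
      exact hft
    have hsig := hGs.hasSum.sigma hfib
    have hone : HasSum (fun m => c (n + m + 1) * (if m = 0 then 1 else 0)) (c (n+1)) := by
      have := hasSum_single (f := fun m => c (n + m + 1) * (if m = 0 then 1 else 0)) 0
        (fun m hm => by simp [hm])
      simpa using this
    have hval2 : ∑' y, G y = c (n+1) := hsig.unique hone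
    have hprod := hsum2.hasSum.prod_fiberwise (fun l => (hsum2.prod_factor l).hasSum)
    have htse : ∑' x : ℕ×ℕ, G (sigFinEquiv x) = ∑' y, G y := sigFinEquiv.tsum_eq G
    rw [htse, hval2] at hprod
    have hfl : ∀ l, (∑' q, G (sigFinEquiv (l, q))) = betaFn s l * B (n + l) := by
      intro l
      calc (∑' q, G (sigFinEquiv (l, q)))
          = ∑' q, betaFn s l * (c ((n + l) + q + 1) * s q) := by
            apply tsum_congr
            intro q
            rw [hGe (l, q), show n + (l + q) + 1 = (n + l) + q + 1 by omega]
        _ = betaFn s l * ∑' q, (c ((n + l) + q + 1) * s q) := tsum_mul_left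
        _ = betaFn s l * B (n + l) := rfl
    rw [show (fun l => betaFn s l * B (n + l)) = (fun l => ∑' q, G (sigFinEquiv (l, q)))
      from funext fun l => (hfl l).symm]
    exact hprod
  -- bound for c (n+1)
  have hcb : ∀ n, ‖c (n+1)‖ ≤ (M * (1 - 2*ρ/r₁)⁻¹) * (r₁⁻¹) ^ n := by
    intro n
    have hterm : ∀ l, ‖betaFn s l * B (n + l)‖ ≤ (M * (r₁⁻¹)^n) * (2*ρ/r₁)^l := by
      intro l
      rw [norm_mul]
      calc ‖betaFn s l‖ * ‖B (n + l)‖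
          ≤ (2*ρ)^l * (M * (r₁⁻¹)^(n+l)) := by
            apply mul_le_mul (hβ l) (hBb _) (norm_nonneg _) (by positivity)
        _ = (M * (r₁⁻¹)^n) * (2*ρ/r₁)^l := by
            rw [div_pow, mul_pow, pow_add]
            field_simp
            rw [mul_assoc (ρ ^ l * M) ((1 / r₁) ^ l), ← mul_pow, one_div, inv_mul_cancel₀ hr₁.ne', one_pow, mul_one]
    have hgs : Summable (fun l => (M * (r₁⁻¹)^n) * (2*ρ/r₁)^l) :=
      (summable_geometric_of_lt_one (by positivity) h2ρt).mul_left _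
    have hns : Summable (fun l => ‖betaFn s l * B (n + l)‖) :=
      Summable.of_nonneg_of_le (fun l => norm_nonneg _) hterm hgs
    rw [← (inv n).tsum_eq, ]
    calc ‖∑' l, betaFn s l * B (n + l)‖
        ≤ ∑' l, ‖betaFn s l * B (n + l)‖ := norm_tsum_le_tsum_norm hns
      _ ≤ ∑' l, (M * (r₁⁻¹)^n) * (2*ρ/r₁)^l := Summable.tsum_le_tsum hterm hns hgs
      _ = (M * (1 - 2*ρ/r₁)⁻¹) * (r₁⁻¹) ^ n := by
          rw [tsum_mul_left, tsum_geometric_of_lt_one (by positivity) h2ρt]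
          ring
  -- c 0 = 0
  have hc0 : c 0 = 0 := by
    have h00 := hhsum (u := 0) (by simpa using ht0)
    have h01 : HasSum (fun m => c m * (0:ℂ) ^ m) (c 0) := by
      have := hasSum_single (f := fun m => c m * (0:ℂ) ^ m) 0 (fun m hm => by
        show c m * (0:ℂ) ^ m = 0
        rw [zero_pow hm, mul_zero])
      simpa using this
    rw [hh0] at h00
    exact h01.unique h00
  -- final assembly
  have hw₀t : ‖w₀‖ < t := lt_of_le_of_lt hw₀ (h2.trans ht1)
  have hr01 : r₀/r₁ < 1 := (div_lt_one hr₁).mpr h2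
  set D : ℕ → ℝ := fun m => Nat.casesOn m 0
    (fun n => ((M * (1 - 2*ρ/r₁)⁻¹) * r₀) * (r₀/r₁)^n) with hD_def
  have hDsum : Summable D := by
    apply (summable_nat_add_iff 1).mp
    have : Summable (fun n => ((M * (1 - 2*ρ/r₁)⁻¹) * r₀) * (r₀/r₁)^n) :=
      (summable_geometric_of_lt_one (by positivity) hr01).mul_left _
    exact this.congr (fun n => rfl)
  have hterm : ∀ m, ‖c m * w₀ ^ m‖ ≤ D m := by
    intro m
    cases m with
    | zero => simp [hc0, hD_def]
    | succ n =>
      rw [norm_mul, norm_pow]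
      calc ‖c (n+1)‖ * ‖w₀‖ ^ (n+1)
          ≤ ((M * (1 - 2*ρ/r₁)⁻¹) * (r₁⁻¹)^n) * r₀^(n+1) := by
            have hx : (0:ℝ) < 1 - 2*ρ/r₁ := by
              have := h2ρt; linarith
            apply mul_le_mul (hcb n) (pow_le_pow_left₀ (norm_nonneg _) hw₀ _)
              (pow_nonneg (norm_nonneg _) _) (by positivity)
        _ = D (n+1) := by
            rw [hD_def]
            simp only [div_pow]
            rw [pow_succ]
            field_simp
            rw [mul_assoc M ((1 / r₁) ^ n), ← mul_pow, one_div, inv_mul_cancel₀ hr₁.ne', one_pow, mul_one]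
  have hnsum : Summable (fun m => ‖c m * w₀ ^ m‖) :=
    Summable.of_nonneg_of_le (fun m => norm_nonneg _) hterm hDsum
  have hDt : ∑' m, D m = ((M * (1 - 2*ρ/r₁)⁻¹) * r₀) * (1 - r₀/r₁)⁻¹ := by
    rw [Summable.tsum_eq_zero_add hDsum]
    simp only [hD_def]
    rw [tsum_mul_left, tsum_geometric_of_lt_one (by positivity) hr01]
    simp
  calc ‖h w₀‖ = ‖∑' m, c m * w₀ ^ m‖ := by
        rw [(hhsum hw₀t).tsum_eq]
    _ ≤ ∑' m, ‖c m * w₀ ^ m‖ := norm_tsum_le_tsum_norm hnsum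
    _ ≤ ∑' m, D m := Summable.tsum_le_tsum hterm hnsum hDsum
    _ = ((M * (1 - 2*ρ/r₁)⁻¹) * r₀) * (1 - r₀/r₁)⁻¹ := hDt
    _ = (r₀ / ((1 - 2 * ρ / r₁) * (1 - r₀ / r₁))) * M := by
        have hx : (0:ℝ) < 1 - 2*ρ/r₁ := by linarith
        have hy : (0:ℝ) < 1 - r₀/r₁ := by linarith
        field_simp
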